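/- Let P be a nonconstant polynomial with complex coefficients, viewed as the map z ↦ P(z) on ℂ, and let K be a nonempty compact connected subset of ℂ. Then P⁻¹(K) has only finitely many connected components, and every connected component C of P⁻¹(K) is mapped surjectively onto K by P, i.e. P(C) = K. -/

import Mathlib

open Polynomial Set Metric Bornology

private lemma poly_preimage_compact {P : Polynomial ℂ} (hP : 0 < P.natDegree)
    {K : Set ℂ} (hK : IsCompact K) :
    IsCompact ((fun w : ℂ => P.eval w) ⁻¹' K) := by
  obtain ⟨R, hR⟩ : ∃ R, ∀ k ∈ K, ‖k‖ ≤ R := hK.isBounded.exists_norm_le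
  have htend : Filter.Tendsto (fun x : ℂ => ‖P.eval x‖) (cobounded ℂ) Filter.atTop :=
    P.tendsto_norm_atTop (natDegree_pos_iff_degree_pos.mp hP) tendsto_norm_cobounded_atTop
  have hev : {z : ℂ | R < ‖P.eval z‖} ∈ cobounded ℂ := htend.eventually_gt_atTop R
  have hbdd : IsBounded ((fun w : ℂ => P.eval w) ⁻¹' K) := by
    refine ((isBounded_def).mpr ?_ : IsBounded {z : ℂ | R < ‖P.eval z‖}ᶜ).subset ?_
    · simpa using hev
    · intro z hz
      simp only [mem_compl_iff, mem_setOf_eq, not_lt]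
      exact hR _ hz
  exact isCompact_of_isClosed_isBounded (hK.isClosed.preimage P.continuous) hbdd

private lemma poly_isOpenMap {P : Polynomial ℂ} (hP : 0 < P.natDegree) :
    IsOpenMap (fun w : ℂ => P.eval w) := by
  have ha : AnalyticOnNhd ℂ (fun w : ℂ => P.eval w) univ :=
    fun z _ => P.differentiable.analyticAt z
  rcases ha.is_constant_or_isOpen isPreconnected_univ with h | h
  · exfalso
    obtain ⟨w, hw⟩ := h
    have h0 : P - C w = 0 := by
      apply Polynomial.eq_zero_of_infinite_isRoot
      apply Set.infinite_univ.mono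
      intro z _
      simp [IsRoot, hw z (mem_univ z)]
    have hPC : P = C w := by rwa [sub_eq_zero] at h0
    simp [hPC, natDegree_C] at hP
  · intro s hs
    exact h s (subset_univ s) hs

/-- Key lemma: any nonempty "clopen piece" `A` of `L = P⁻¹(K)` (i.e. `A` and `L \ A`
are both compact) satisfies `K ⊆ P(A)`. -/
private lemma key_clopen {P : Polynomial ℂ} (hP : 0 < P.natDegree)
    {K : Set ℂ} (hKne : K.Nonempty) (hKcomp : IsCompact K) (hKconn : IsConnected K)
    {A : Set ℂ} (hAL : A ⊆ (fun w : ℂ => P.eval w) ⁻¹' K) (hAne : A.Nonempty)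
    (hA : IsCompact A) (hB : IsCompact (((fun w : ℂ => P.eval w) ⁻¹' K) \ A)) :
    K ⊆ (fun w : ℂ => P.eval w) '' A := by
  set f : ℂ → ℂ := fun w => P.eval w with hf
  set L : Set ℂ := f ⁻¹' K with hLdef
  have hfc : Continuous f := P.continuous
  have hfo : IsOpenMap f := poly_isOpenMap hP
  -- choose δ with thickening δ A ⊆ (L \ A)ᶜ
  obtain ⟨δ, hδpos, hδ⟩ : ∃ δ > 0, thickening δ A ⊆ (L \ A)ᶜ :=
    hA.exists_thickening_subset_open hB.isClosed.isOpen_compl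
      (fun a ha h => h.2 ha)
  set U : Set ℂ := thickening (δ/2) A with hU
  have hUopen : IsOpen U := isOpen_thickening
  have hAU : A ⊆ U := self_subset_thickening (half_pos hδpos) A
  have hclosU : closure U ⊆ thickening δ A :=
    (closure_thickening_subset_cthickening _ _).trans
      (cthickening_subset_thickening' hδpos (half_lt_self hδpos) A)
  have hclosUcomp : IsCompact (closure U) :=
    (hA.cthickening).of_isClosed_subset isClosed_closure
      ((closure_thickening_subset_cthickening _ _))
  -- closure U ∩ L ⊆ A
  have hclosUL : closure U ∩ L ⊆ A := by
    intro z hz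
    have := hδ (hclosU hz.1)
    simp only [mem_compl_iff, mem_diff, not_and, not_not] at this
    exact this hz.2
  -- frontier U ∩ L = ∅
  have hfrontL : ∀ z ∈ frontier U, z ∉ L := by
    intro z hzf hzL
    have hzA : z ∈ A := hclosUL ⟨frontier_subset_closure hzf, hzL⟩
    have : z ∈ U ∩ frontier U := ⟨hAU hzA, hzf⟩
    rw [hUopen.inter_frontier_eq] at this
    exact this
  set T : Set ℂ := f '' frontier U with hT
  have hTcomp : IsCompact T :=
    (hclosUcomp.of_isClosed_subset isClosed_frontier frontier_subset_closure).image hfc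
  have hKT : K ⊆ Tᶜ := by
    rintro k hk ⟨z, hzf, rfl⟩
    exact hfrontL z hzf hk
  obtain ⟨k₀, hk₀⟩ := hKne
  set W : Set ℂ := connectedComponentIn Tᶜ k₀ with hW
  have hKW : K ⊆ W := hKconn.isPreconnected.subset_connectedComponentIn hk₀ hKT
  have hWopen : IsOpen W := hTcomp.isClosed.isOpen_compl.connectedComponentIn
  have hWT : W ⊆ Tᶜ := connectedComponentIn_subset _ _
  -- W ⊆ f '' U ∪ (f '' closure U)ᶜ
  have hWsub : W ⊆ f '' U ∪ (f '' closure U)ᶜ := by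
    intro w hw
    by_cases hwc : w ∈ f '' closure U
    · obtain ⟨z, hz, rfl⟩ := hwc
      rcases (closure_eq_self_union_frontier U ▸ hz) with hzU | hzF
      · exact Or.inl ⟨z, hzU, rfl⟩
      · exact absurd ⟨z, hzF, rfl⟩ (hWT hw)
    · exact Or.inr hwc
  have hdisj : Disjoint (f '' U) ((f '' closure U)ᶜ) :=
    Set.disjoint_compl_right_iff_subset.mpr (image_mono (f := f) subset_closure)
  obtain ⟨a, haA⟩ := hAne
  have hmem : (W ∩ f '' U).Nonempty :=
    ⟨f a, hKW (hAL haA), ⟨a, hAU haA, rfl⟩⟩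
  have hWfU : W ⊆ f '' U := by
    refine isPreconnected_connectedComponentIn.subset_left_of_subset_union
      (hfo U hUopen) ((hclosUcomp.image hfc).isClosed.isOpen_compl) hdisj hWsub hmem
  intro k hk
  obtain ⟨u, huU, huk⟩ := hWfU (hKW hk)
  have huL : u ∈ L := by simp only [hLdef, mem_preimage]; rw [huk]; exact hk
  exact ⟨u, hclosUL ⟨subset_closure huU, huL⟩, huk⟩

private lemma surj_component {P : Polynomial ℂ} (hP : 0 < P.natDegree)
    {K : Set ℂ} (hKne : K.Nonempty) (hKcomp : IsCompact K) (hKconn : IsConnected K)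
    {z : ℂ} (hz : z ∈ (fun w : ℂ => P.eval w) ⁻¹' K) :
    (fun w : ℂ => P.eval w) '' (connectedComponentIn ((fun w : ℂ => P.eval w) ⁻¹' K) z) = K := by
  set f : ℂ → ℂ := fun w => P.eval w with hf
  set L : Set ℂ := f ⁻¹' K with hLdef
  have hfc : Continuous f := P.continuous
  have hLcomp : IsCompact L := poly_preimage_compact hP hKcomp
  haveI : CompactSpace L := isCompact_iff_compactSpace.mp hLcomp
  set x₀ : L := ⟨z, hz⟩ with hx₀
  have hcc : connectedComponent x₀ = ⋂ Z : {Z : Set L // IsClopen Z ∧ x₀ ∈ Z}, (Z : Set L) :=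
    connectedComponent_eq_iInter_isClopen x₀
  have himg : connectedComponentIn L z = Subtype.val '' connectedComponent x₀ :=
    connectedComponentIn_eq_image hz
  apply Set.Subset.antisymm
  · rintro k ⟨w, hw, rfl⟩
    exact connectedComponentIn_subset L z hw
  · intro k hk
    -- for each clopen Z containing x₀, val '' Z is a "clopen piece" of L
    have hkey : ∀ Z : {Z : Set L // IsClopen Z ∧ x₀ ∈ Z},
        ((Subtype.val '' Z.1) ∩ f ⁻¹' {k}).Nonempty := by
      intro Z
      have hsubL : Subtype.val '' Z.1 ⊆ L := by
        rintro _ ⟨x, _, rfl⟩; exact x.2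
      have hcompA : IsCompact (Subtype.val '' Z.1) :=
        (Z.2.1.isClosed.isCompact).image continuous_subtype_val
      have hBeq : L \ (Subtype.val '' Z.1) = Subtype.val '' Z.1ᶜ := by
        ext w
        constructor
        · rintro ⟨hwL, hwn⟩
          exact ⟨⟨w, hwL⟩, fun hmem => hwn ⟨⟨w, hwL⟩, hmem, rfl⟩, rfl⟩
        · rintro ⟨x, hx, rfl⟩
          refine ⟨x.2, ?_⟩
          rintro ⟨y, hy, hyx⟩
          exact hx ((show x = y from Subtype.ext hyx.symm) ▸ hy)
      have hcompB : IsCompact (L \ (Subtype.val '' Z.1)) := by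
        rw [hBeq]
        exact (Z.2.1.compl.isClosed.isCompact).image continuous_subtype_val
      have hsurj : K ⊆ f '' (Subtype.val '' Z.1) :=
        key_clopen hP hKne hKcomp hKconn hsubL ⟨z, x₀, Z.2.2, rfl⟩ hcompA hcompB
      obtain ⟨w, hwA, hwk⟩ := hsurj hk
      exact ⟨w, hwA, hwk⟩
    -- directed intersection of nonempty compact closed sets
    have hne : (⋂ Z : {Z : Set L // IsClopen Z ∧ x₀ ∈ Z},
        ((Subtype.val '' Z.1) ∩ f ⁻¹' {k})).Nonempty := by
      haveI : Nonempty {Z : Set L // IsClopen Z ∧ x₀ ∈ Z} :=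
        ⟨⟨univ, isClopen_univ, mem_univ _⟩⟩
      apply IsCompact.nonempty_iInter_of_directed_nonempty_isCompact_isClosed
      · rintro Z₁ Z₂
        refine ⟨⟨Z₁.1 ∩ Z₂.1, Z₁.2.1.inter Z₂.2.1, Z₁.2.2, Z₂.2.2⟩, ?_, ?_⟩
        · exact inter_subset_inter_left _ (image_mono inter_subset_left)
        · exact inter_subset_inter_left _ (image_mono inter_subset_right)
      · exact hkey
      · intro Z
        exact ((Z.2.1.isClosed.isCompact).image continuous_subtype_val).inter_right
          (isClosed_singleton.preimage hfc)
      · intro Z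
        exact (((Z.2.1.isClosed.isCompact).image continuous_subtype_val).isClosed).inter
          (isClosed_singleton.preimage hfc)
    obtain ⟨w, hw⟩ := hne
    have hwall : ∀ Z : {Z : Set L // IsClopen Z ∧ x₀ ∈ Z},
        w ∈ (Subtype.val '' Z.1) ∩ f ⁻¹' {k} := by
      intro Z; exact mem_iInter.mp hw Z
    have hwL : w ∈ L := by
      obtain ⟨x, _, rfl⟩ := (hwall ⟨univ, isClopen_univ, mem_univ _⟩).1
      exact x.2
    have hwk : f w = k := (hwall ⟨univ, isClopen_univ, mem_univ _⟩).2
    have hwcc : (⟨w, hwL⟩ : L) ∈ connectedComponent x₀ := by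
      rw [hcc]
      apply mem_iInter.mpr
      intro Z
      obtain ⟨x, hx, hxw⟩ := (hwall Z).1
      rwa [show (⟨w, hwL⟩ : L) = x from Subtype.ext hxw.symm]
    exact ⟨w, himg ▸ ⟨⟨w, hwL⟩, hwcc, rfl⟩, hwk⟩

/-- For a nonconstant polynomial `P` over `ℂ` and a continuum `K ⊆ ℂ` (a nonempty
compact connected set), the preimage `P⁻¹(K)` has finitely many connected components,
and each connected component `C` of `P⁻¹(K)` satisfies `P(C) = K`. -/
theorem preimage_continuum_components (P : Polynomial ℂ) (hP : 0 < P.natDegree)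
    (K : Set ℂ) (hKne : K.Nonempty) (hKcomp : IsCompact K) (hKconn : IsConnected K) :
    {C : Set ℂ | ∃ z ∈ (fun w : ℂ => P.eval w) ⁻¹' K,
        C = connectedComponentIn ((fun w : ℂ => P.eval w) ⁻¹' K) z}.Finite ∧
    ∀ C : Set ℂ,
      (∃ z ∈ (fun w : ℂ => P.eval w) ⁻¹' K,
        C = connectedComponentIn ((fun w : ℂ => P.eval w) ⁻¹' K) z) →
      (fun w : ℂ => P.eval w) '' C = K := by
  set f : ℂ → ℂ := fun w => P.eval w with hf
  set L : Set ℂ := f ⁻¹' K with hLdef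
  have hsurj : ∀ C : Set ℂ, (∃ z ∈ L, C = connectedComponentIn L z) → f '' C = K := by
    rintro C ⟨z, hz, rfl⟩
    exact surj_component hP hKne hKcomp hKconn hz
  refine ⟨?_, hsurj⟩
  obtain ⟨k₀, hk₀⟩ := hKne
  have hroots : {w : ℂ | f w = k₀}.Finite := by
    have hne : P - C k₀ ≠ 0 := by
      intro h
      have : P = C k₀ := by rwa [sub_eq_zero] at h
      simp [this, natDegree_C] at hP
    have := Polynomial.finite_setOf_isRoot hne
    apply this.subset
    intro w hw
    simp only [mem_setOf_eq, IsRoot, eval_sub, eval_C, sub_eq_zero]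
    exact hw
  apply (hroots.image (fun w => connectedComponentIn L w)).subset
  rintro S ⟨z, hz, rfl⟩
  have hk : k₀ ∈ f '' connectedComponentIn L z :=
    (hsurj _ ⟨z, hz, rfl⟩) ▸ hk₀
  obtain ⟨w, hwC, hwk⟩ := hk
  exact ⟨w, hwk, (connectedComponentIn_eq hwC).symm⟩
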